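/- arXiv:1908.09064 — 2 statements merged into one kernel-verified Lean document; each statement's English description precedes it below -/
import Mathlib

section
/- Fix u > 0, r > 0, L > 0 with |L − r| < u < L + r, and set a = (L² + r² − u²)/(2u), b = (2rL)/(2u) = rL/u, c = √(b² − a²). For small x > 0 define φ(x) = arccos(1 − (1/(a²+c²))·[c² + a·x + (a/(2u))·x² − c·√(c² + 2a·x + (a/u)·x² − (x + x²/(2u))²)]). Then lim_{x→0⁺} φ(x)/x = 1/c = 2u/√((u² − (L−r)²)·((L+r)² − u²)). -/
open Real Filter Topology

lemma arccos_one_sub_two_sq {s : ℝ} (h0 : 0 ≤ s) (h1 : s ≤ 1) :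
    Real.arccos (1 - 2 * s ^ 2) = 2 * Real.arcsin s := by
  have hs : Real.sin (Real.arcsin s) = s := Real.sin_arcsin (by linarith) h1
  have hcos : Real.cos (2 * Real.arcsin s) = 1 - 2 * s ^ 2 := by
    have h2 := Real.sin_sq_add_cos_sq (Real.arcsin s)
    rw [Real.cos_two_mul]
    nlinarith [hs]
  rw [← hcos, Real.arccos_cos]
  · have := Real.arcsin_nonneg.mpr h0; linarith
  · have := Real.arcsin_le_pi_div_two s; linarith

lemma arcsin_div_self_tendsto :
    Tendsto (fun s : ℝ => Real.arcsin s / s) (𝓝[≠] (0:ℝ)) (𝓝 1) := by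
  have h : HasDerivAt Real.arcsin 1 0 := by
    have := Real.hasDerivAt_arcsin (by norm_num : (0:ℝ) ≠ -1) (by norm_num : (0:ℝ) ≠ 1)
    simpa using this
  have := hasDerivAt_iff_tendsto_slope.mp h
  refine this.congr fun y => ?_
  simp [slope_def_field, div_eq_mul_inv, mul_comm]

set_option maxHeartbeats 1000000 in
/-- The key limit of the proof of Lemma 2: the angular width `φ(x)` of the
intersection of a circle of radius `L` (centered at distance `r` from the
annulus center) with an annulus of radii `u` and `u + x` satisfies
`φ(x)/x → 1/c = 2u/√((u² − (L−r)²)((L+r)² − u²))` as `x → 0⁺`. -/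
theorem angular_width_limit
    (u r L : ℝ) (hu : 0 < u) (hr : 0 < r) (hL : 0 < L)
    (htri : |L - r| < u ∧ u < L + r)
    (a b c : ℝ)
    (ha : a = (L ^ 2 + r ^ 2 - u ^ 2) / (2 * u))
    (hb : b = r * L / u)
    (hc : c = Real.sqrt (b ^ 2 - a ^ 2))
    (φ : ℝ → ℝ)
    (hφ : φ = fun x => Real.arccos (1 - (1 / (a ^ 2 + c ^ 2)) *
      (c ^ 2 + a * x + (a / (2 * u)) * x ^ 2 -
        c * Real.sqrt (c ^ 2 + 2 * a * x + (a / u) * x ^ 2 -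
          (x + x ^ 2 / (2 * u)) ^ 2)))) :
    Tendsto (fun x => φ x / x) (nhdsWithin 0 (Set.Ioi 0)) (𝓝 (1 / c)) ∧
    1 / c = 2 * u / Real.sqrt ((u ^ 2 - (L - r) ^ 2) * ((L + r) ^ 2 - u ^ 2)) := by
  obtain ⟨ht1, ht2⟩ := htri
  have hu0 : u ≠ 0 := ne_of_gt hu
  have habs := abs_lt.mp ht1
  have hP1 : 0 < u ^ 2 - (L - r) ^ 2 := by nlinarith [habs.1, habs.2]
  have hP2 : 0 < (L + r) ^ 2 - u ^ 2 := by nlinarith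
  have hkey : b ^ 2 - a ^ 2 =
      (u ^ 2 - (L - r) ^ 2) * ((L + r) ^ 2 - u ^ 2) / (4 * u ^ 2) := by
    rw [ha, hb]; field_simp; ring
  have hba : 0 < b ^ 2 - a ^ 2 := by rw [hkey]; positivity
  have hc0 : 0 < c := by rw [hc]; exact Real.sqrt_pos.mpr hba
  have hc2 : c ^ 2 = b ^ 2 - a ^ 2 := by rw [hc]; exact Real.sq_sqrt hba.le
  have hb2 : a ^ 2 + c ^ 2 = b ^ 2 := by rw [hc2]; ring
  have hbpos : 0 < b := by rw [hb]; positivity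
  -- Part 2 first
  have hpart2 : 1 / c = 2 * u /
      Real.sqrt ((u ^ 2 - (L - r) ^ 2) * ((L + r) ^ 2 - u ^ 2)) := by
    rw [hc, hkey, show (4:ℝ) * u ^ 2 = (2 * u) ^ 2 by ring,
      Real.sqrt_div (by positivity) ((2 * u) ^ 2),
      Real.sqrt_sq (by positivity : (0:ℝ) ≤ 2 * u), one_div_div]
  refine ⟨?_, hpart2⟩
  -- abbreviations
  set S : ℝ → ℝ := fun x => c ^ 2 + 2 * a * x + (a / u) * x ^ 2 -
      (x + x ^ 2 / (2 * u)) ^ 2 with hS_def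
  set G : ℝ → ℝ := fun x => c ^ 2 + a * x + (a / (2 * u)) * x ^ 2 with hG_def
  set D : ℝ → ℝ := fun x => G x + c * Real.sqrt (S x) with hD_def
  set E : ℝ → ℝ := fun x => 1 + x / (2 * u) with hE_def
  have hScont : Continuous S := by unfold S; fun_prop
  have hGcont : Continuous G := by unfold G; fun_prop
  have hEcont : Continuous E := by unfold E; fun_prop
  have hStend : Tendsto S (𝓝[>] (0:ℝ)) (𝓝 (c ^ 2)) :=
    (hScont.tendsto' 0 (c ^ 2) (by simp [hS_def])).mono_left nhdsWithin_le_nhds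
  have hGtend : Tendsto G (𝓝[>] (0:ℝ)) (𝓝 (c ^ 2)) :=
    (hGcont.tendsto' 0 (c ^ 2) (by simp [hG_def])).mono_left nhdsWithin_le_nhds
  have hEtend : Tendsto E (𝓝[>] (0:ℝ)) (𝓝 1) :=
    (hEcont.tendsto' 0 1 (by simp [hE_def])).mono_left nhdsWithin_le_nhds
  have hDtend : Tendsto D (𝓝[>] (0:ℝ)) (𝓝 (2 * c ^ 2)) := by
    have hsq : Tendsto (fun x => Real.sqrt (S x)) (𝓝[>] (0:ℝ)) (𝓝 c) := by
      have := hStend.sqrt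
      rwa [Real.sqrt_sq hc0.le] at this
    have h := hGtend.add (hsq.const_mul c)
    rw [show c ^ 2 + c * c = 2 * c ^ 2 by ring] at h
    exact h
  have hSpos : ∀ᶠ x in 𝓝[>] (0:ℝ), 0 < S x :=
    hStend.eventually (eventually_gt_nhds (by positivity))
  have hDpos : ∀ᶠ x in 𝓝[>] (0:ℝ), 0 < D x :=
    hDtend.eventually (eventually_gt_nhds (by positivity))
  -- q = f/2, t = sqrt q
  set q : ℝ → ℝ := fun x => x ^ 2 * (E x) ^ 2 / D x / 2 with hq_def
  set t : ℝ → ℝ := fun x => Real.sqrt (q x) with ht_def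
  have hqtend : Tendsto q (𝓝[>] (0:ℝ)) (𝓝 0) := by
    have hnum : Tendsto (fun x => x ^ 2 * (E x) ^ 2) (𝓝[>] (0:ℝ)) (𝓝 0) := by
      have : Tendsto (fun x : ℝ => x ^ 2) (𝓝[>] (0:ℝ)) (𝓝 0) := by
        have := (continuous_pow 2).tendsto' (0:ℝ) 0 (by norm_num)
        exact this.mono_left nhdsWithin_le_nhds
      simpa using this.mul (hEtend.pow 2)
    have := hnum.div hDtend (by positivity)
    simpa [hq_def, div_div] using (this.div_const 2)
  have hqlt : ∀ᶠ x in 𝓝[>] (0:ℝ), q x < 1 :=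
    hqtend.eventually (eventually_lt_nhds one_pos)
  have hxpos : ∀ᶠ x in 𝓝[>] (0:ℝ), 0 < x := self_mem_nhdsWithin
  -- eventual key identities
  have hkey_ev : ∀ᶠ x in 𝓝[>] (0:ℝ),
      φ x = 2 * Real.arcsin (t x) ∧ t x = x * E x / Real.sqrt (2 * D x) := by
    filter_upwards [hSpos, hDpos, hqlt, hxpos] with x hSx hDx hqx hx
    have hEx : 0 < E x := by
      have : 0 < x / (2 * u) := by positivity
      simp only [hE_def]; linarith
    have hq0 : 0 ≤ q x := by
      have : 0 < q x := by simp only [hq_def]; positivity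
      exact this.le
    have ht2 : t x ^ 2 = q x := Real.sq_sqrt hq0
    have htle : t x ≤ 1 := Real.sqrt_le_one.mpr hqx.le
    have ht0 : 0 ≤ t x := Real.sqrt_nonneg _
    constructor
    · -- φ x = 2 arcsin (t x)
      have hsqS : Real.sqrt (S x) ^ 2 = S x := Real.sq_sqrt hSx.le
      have hpoly : G x ^ 2 - c ^ 2 * S x = (a ^ 2 + c ^ 2) * (x ^ 2 * (E x) ^ 2) := by
        simp only [hG_def, hS_def, hE_def]
        field_simp
        ring
      have hdiff : G x - c * Real.sqrt (S x) = b ^ 2 * (x ^ 2 * (E x) ^ 2) / D x := by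
        rw [eq_div_iff hDx.ne']
        have : (G x - c * Real.sqrt (S x)) * D x = G x ^ 2 - c ^ 2 * S x := by
          simp only [hD_def]
          nlinarith [hsqS]
        rw [this, hpoly, hb2]
      have harg : 1 - (1 / (a ^ 2 + c ^ 2)) * (G x - c * Real.sqrt (S x))
          = 1 - 2 * t x ^ 2 := by
        rw [hdiff, hb2, ht2]
        have hbne : b ^ 2 ≠ 0 := by positivity
        simp only [hq_def]
        field_simp
      have hφx : φ x = Real.arccos (1 - (1 / (a ^ 2 + c ^ 2)) * (G x - c * Real.sqrt (S x))) := by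
        rw [hφ]
      rw [hφx, harg, arccos_one_sub_two_sq ht0 htle]
    · -- t x = x * E x / sqrt (2 * D x)
      have : q x = (x * E x) ^ 2 / (2 * D x) := by
        simp only [hq_def]; field_simp
      rw [ht_def]
      show Real.sqrt (q x) = _
      rw [this, Real.sqrt_div (by positivity) (2 * D x),
        Real.sqrt_sq (by positivity : (0:ℝ) ≤ x * E x)]
  -- limit of t x / x
  have httend : Tendsto t (𝓝[>] (0:ℝ)) (𝓝 0) := by
    have := hqtend.sqrt
    simpa [ht_def] using this
  have htne : ∀ᶠ x in 𝓝[>] (0:ℝ), t x ≠ 0 := by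
    filter_upwards [hSpos, hDpos, hxpos] with x hSx hDx hx
    have hEx : 0 < E x := by
      have : 0 < x / (2 * u) := by positivity
      simp only [hE_def]; linarith
    have : 0 < q x := by simp only [hq_def]; positivity
    exact (Real.sqrt_pos.mpr this).ne'
  have harc : Tendsto (fun x => Real.arcsin (t x) / t x) (𝓝[>] (0:ℝ)) (𝓝 1) := by
    apply arcsin_div_self_tendsto.comp
    exact tendsto_nhdsWithin_of_tendsto_nhds_of_eventually_within t httend htne
  have htxtend : Tendsto (fun x => t x / x) (𝓝[>] (0:ℝ)) (𝓝 (1 / (2 * c))) := by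
    have hdenom : Tendsto (fun x => Real.sqrt (2 * D x)) (𝓝[>] (0:ℝ)) (𝓝 (2 * c)) := by
      have := (hDtend.const_mul 2).sqrt
      have h4 : Real.sqrt (2 * (2 * c ^ 2)) = 2 * c := by
        rw [show 2 * (2 * c ^ 2) = (2 * c) ^ 2 by ring,
          Real.sqrt_sq (by positivity : (0:ℝ) ≤ 2 * c)]
      rwa [h4] at this
    have hmain : Tendsto (fun x => E x / Real.sqrt (2 * D x)) (𝓝[>] (0:ℝ))
        (𝓝 (1 / (2 * c))) := hEtend.div hdenom (by positivity)
    apply hmain.congr'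
    filter_upwards [hkey_ev, hxpos] with x hx hx0
    rw [hx.2, div_div, mul_comm (Real.sqrt (2 * D x)) x, mul_div_mul_left _ _ hx0.ne']
  -- combine
  have hfinal : Tendsto (fun x => 2 * (Real.arcsin (t x) / t x) * (t x / x))
      (𝓝[>] (0:ℝ)) (𝓝 (1 / c)) := by
    have := ((harc.const_mul 2).mul htxtend)
    have heq : (2:ℝ) * 1 * (1 / (2 * c)) = 1 / c := by
      field_simp
    rwa [heq] at this
  apply hfinal.congr'
  filter_upwards [hkey_ev, htne, hxpos] with x hx htx hx0
  rw [hx.1]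
  field_simp
end

section
/- Let g: (0,∞) → [0,1] be defined (for fixed d > 0, bound M ≥ d) by the conditional probability structure of L = √(Z² + d² − 2Zd cos Φ) with Φ uniform on [0,2π) and Z supported on [0,M]. If Z has a continuous density f_Z, then L has density f_L(l) = ∫_{|l−d|}^{min(l+d, M)} (2l · f_Z(z)) / (π·√((l² − (z−d)²)·((z+d)² − l²))) dz for 0 < l < M + d. -/
open MeasureTheory ProbabilityTheory Real

/-- The uniform distribution on `[0, 2π)`. -/
noncomputable def uniformAngle : Measure ℝ :=
  (ENNReal.ofReal (2 * π))⁻¹ • volume.restrict (Set.Ico 0 (2 * π))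

open Set

lemma quartic_pos {p q t : ℝ} (h1 : |p - q| < t) (h2 : t < p + q) :
    0 < (t ^ 2 - (p - q) ^ 2) * ((p + q) ^ 2 - t ^ 2) := by
  have ht : 0 < t := lt_of_le_of_lt (abs_nonneg _) h1
  have h1' := abs_lt.mp h1
  have : (p - q) ^ 2 < t ^ 2 := sq_lt_sq' h1'.1 h1'.2
  have : t ^ 2 < (p + q) ^ 2 := sq_lt_sq' (by linarith) h2
  nlinarith

lemma u_mem {p q t : ℝ} (hp : 0 < p) (hq : 0 < q) (h1 : |p - q| < t) (h2 : t < p + q) :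
    -1 < (p ^ 2 + q ^ 2 - t ^ 2) / (2 * p * q) ∧
    (p ^ 2 + q ^ 2 - t ^ 2) / (2 * p * q) < 1 := by
  have ht : 0 < t := lt_of_le_of_lt (abs_nonneg _) h1
  have h1' := abs_lt.mp h1
  have hlt : (p - q) ^ 2 < t ^ 2 := sq_lt_sq' h1'.1 h1'.2
  have hgt : t ^ 2 < (p + q) ^ 2 := sq_lt_sq' (by linarith) h2
  have h2pq : 0 < 2 * p * q := by positivity
  constructor
  · rw [lt_div_iff₀ h2pq]; nlinarith
  · rw [div_lt_one h2pq]; nlinarith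

lemma one_sub_u_sq {p q t : ℝ} (hp : 0 < p) (hq : 0 < q) :
    1 - ((p ^ 2 + q ^ 2 - t ^ 2) / (2 * p * q)) ^ 2 =
      (t ^ 2 - (p - q) ^ 2) * ((p + q) ^ 2 - t ^ 2) / (2 * p * q) ^ 2 := by
  field_simp
  ring

lemma hasDerivAt_arccos_u {p q t : ℝ} (hp : 0 < p) (hq : 0 < q)
    (h1 : |p - q| < t) (h2 : t < p + q) :
    HasDerivAt (fun s => arccos ((p ^ 2 + q ^ 2 - s ^ 2) / (2 * p * q)))
      (2 * t / Real.sqrt ((t ^ 2 - (p - q) ^ 2) * ((p + q) ^ 2 - t ^ 2))) t := by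
  have ht : 0 < t := lt_of_le_of_lt (abs_nonneg _) h1
  have h2pq : 0 < 2 * p * q := by positivity
  have hu := u_mem hp hq h1 h2
  set u : ℝ := (p ^ 2 + q ^ 2 - t ^ 2) / (2 * p * q) with hu_def
  have hP : 0 < (t ^ 2 - (p - q) ^ 2) * ((p + q) ^ 2 - t ^ 2) := quartic_pos h1 h2
  have hinner : HasDerivAt (fun s : ℝ => (p ^ 2 + q ^ 2 - s ^ 2) / (2 * p * q))
      (-(2 * t) / (2 * p * q)) t := by
    have : HasDerivAt (fun s : ℝ => p ^ 2 + q ^ 2 - s ^ 2) (-(2 * t)) t := by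
      simpa using ((hasDerivAt_pow 2 t).const_sub (p ^ 2 + q ^ 2))
    simpa [div_eq_mul_inv] using this.div_const (2 * p * q)
  have houter := Real.hasDerivAt_arccos (ne_of_gt hu.1) (ne_of_lt hu.2)
  have := houter.comp t hinner
  refine this.congr_deriv (Eq.symm ?_)
  have hsq : Real.sqrt (1 - u ^ 2) =
      Real.sqrt ((t ^ 2 - (p - q) ^ 2) * ((p + q) ^ 2 - t ^ 2)) / (2 * p * q) := by
    rw [hu_def, one_sub_u_sq hp hq, Real.sqrt_div hP.le, Real.sqrt_sq h2pq.le]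
  rw [hsq]
  have hPs : Real.sqrt ((t ^ 2 - (p - q) ^ 2) * ((p + q) ^ 2 - t ^ 2)) ≠ 0 :=
    ne_of_gt (Real.sqrt_pos.mpr hP)
  field_simp

lemma ftc_core {p q b : ℝ} (hp : 0 < p) (hq : 0 < q) (hb1 : |p - q| ≤ b) (hb2 : b ≤ p + q) :
    IntegrableOn (fun t => 2 * t / Real.sqrt ((t ^ 2 - (p - q) ^ 2) * ((p + q) ^ 2 - t ^ 2)))
      (Ioo |p - q| b) volume ∧
    ∫ t in Ioo |p - q| b,
        2 * t / Real.sqrt ((t ^ 2 - (p - q) ^ 2) * ((p + q) ^ 2 - t ^ 2)) =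
      arccos ((p ^ 2 + q ^ 2 - b ^ 2) / (2 * p * q)) := by
  set a := |p - q| with ha_def
  set f : ℝ → ℝ := fun t => 2 * t / Real.sqrt ((t ^ 2 - (p - q) ^ 2) * ((p + q) ^ 2 - t ^ 2))
    with hf_def
  set F : ℝ → ℝ := fun s => arccos ((p ^ 2 + q ^ 2 - s ^ 2) / (2 * p * q)) with hF_def
  have hcont : ContinuousOn F (Icc a b) :=
    (Real.continuous_arccos.comp (by continuity)).continuousOn
  have hderiv : ∀ t ∈ Ioo a b, HasDerivAt F (f t) t := fun t ht =>
    hasDerivAt_arccos_u hp hq ht.1 (lt_of_lt_of_le ht.2 hb2)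
  have hpos : ∀ t ∈ Ioo a b, 0 ≤ f t := by
    intro t ht
    have htpos : 0 < t := lt_of_le_of_lt (abs_nonneg _) ht.1
    positivity
  have hint : IntegrableOn f (Ioc a b) volume :=
    intervalIntegral.integrableOn_deriv_of_nonneg hcont hderiv hpos
  have hintIoo : IntegrableOn f (Ioo a b) volume := hint.mono_set Ioo_subset_Ioc_self
  refine ⟨hintIoo, ?_⟩
  have heq : ∫ t in Ioo a b, f t = ∫ t in a..b, f t := by
    rw [intervalIntegral.integral_of_le hb1, MeasureTheory.integral_Ioc_eq_integral_Ioo]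
  rw [heq, intervalIntegral.integral_eq_sub_of_hasDerivAt_of_le hb1 hcont hderiv
    ((intervalIntegrable_iff_integrableOn_Ioc_of_le hb1).mpr hint)]
  have hFa : F a = 0 := by
    have : (p ^ 2 + q ^ 2 - a ^ 2) / (2 * p * q) = 1 := by
      rw [ha_def, sq_abs]
      field_simp
      ring
    simp [hF_def, this, Real.arccos_one]
  rw [hFa, sub_zero]

lemma cos_superlevel_volume (u : ℝ) :
    volume ({φ : ℝ | u ≤ Real.cos φ} ∩ Ico 0 (2 * π)) =
      ENNReal.ofReal (2 * arccos u) := by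
  rcases le_or_gt u (-1) with hu | hu
  · have hset : {φ : ℝ | u ≤ Real.cos φ} ∩ Ico 0 (2 * π) = Ico 0 (2 * π) := by
      refine inter_eq_right.mpr fun φ _ => ?_
      exact le_trans hu (Real.neg_one_le_cos φ)
    rw [hset, Real.volume_Ico, Real.arccos_eq_pi.mpr hu]
    norm_num
  rcases le_or_gt 1 u with hu1 | hu1
  · have hset : {φ : ℝ | u ≤ Real.cos φ} ∩ Ico 0 (2 * π) ⊆ {0} := by
      rintro φ ⟨hφ1, hφ2⟩
      have hc1 : Real.cos φ = 1 :=
        le_antisymm (Real.cos_le_one φ) (le_trans hu1 hφ1)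
      obtain ⟨n, hn⟩ := (Real.cos_eq_one_iff φ).mp hc1
      simp only [mem_Ico] at hφ2
      have hπ := Real.pi_pos
      have hn0 : n = 0 := by
        rcases lt_trichotomy n 0 with h | h | h
        · exfalso; have : (n : ℝ) ≤ -1 := by exact_mod_cast Int.le_sub_one_of_lt h
          nlinarith [hφ2.1]
        · exact h
        · exfalso; have : (1 : ℝ) ≤ (n : ℝ) := by exact_mod_cast h
          nlinarith [hφ2.2]
      simp only [hn0, Int.cast_zero, zero_mul] at hn
      simp [← hn]
    have : volume ({φ : ℝ | u ≤ Real.cos φ} ∩ Ico 0 (2 * π)) = 0 :=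
      measure_mono_null hset (measure_singleton 0)
    rw [this, Real.arccos_eq_zero.mpr hu1]
    simp
  · -- -1 < u < 1
    set α := arccos u with hα_def
    have hπ := Real.pi_pos
    have hcosα : Real.cos α = u := Real.cos_arccos hu.le hu1.le
    have hα0 : 0 < α := by
      rcases (Real.arccos_nonneg u).lt_or_eq with h | h
      · exact h
      · exact absurd (Real.arccos_eq_zero.mp h.symm) (not_le.mpr hu1)
    have hαπ : α < π := by
      rcases (Real.arccos_le_pi u).lt_or_eq with h | h
      · exact h
      · exact absurd (Real.arccos_eq_pi.mp h) (not_le.mpr hu)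
    have hset : {φ : ℝ | u ≤ Real.cos φ} ∩ Ico 0 (2 * π) =
        Icc 0 α ∪ Ico (2 * π - α) (2 * π) := by
      ext φ
      simp only [mem_inter_iff, mem_setOf_eq, mem_Ico, mem_union, mem_Icc]
      constructor
      · rintro ⟨hc, h0, h2⟩
        rcases le_or_gt φ π with hφπ | hφπ
        · left
          refine ⟨h0, ?_⟩
          by_contra hcon
          push_neg at hcon
          have := Real.strictAntiOn_cos ⟨Real.arccos_nonneg u, hαπ.le⟩ ⟨h0, hφπ⟩ hcon
          rw [hcosα] at this
          linarith
        · right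
          refine ⟨?_, h2⟩
          by_contra hcon
          push_neg at hcon
          have hsub : α < 2 * π - φ := by linarith
          have hsubπ : 2 * π - φ < π := by linarith
          have := Real.strictAntiOn_cos ⟨Real.arccos_nonneg u, hαπ.le⟩
            ⟨by linarith, hsubπ.le⟩ hsub
          rw [hcosα, Real.cos_two_pi_sub] at this
          linarith
      · rintro (⟨h0, hα⟩ | ⟨h1, h2⟩)
        · refine ⟨?_, h0, by linarith⟩
          rw [← hcosα]
          exact Real.cos_le_cos_of_nonneg_of_le_pi h0 hαπ.le hα
        · refine ⟨?_, by linarith, h2⟩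
          rw [← hcosα, ← Real.cos_two_pi_sub φ]
          exact Real.cos_le_cos_of_nonneg_of_le_pi (by linarith) hαπ.le (by linarith)
    rw [hset, measure_union ?_ measurableSet_Ico]
    · rw [Real.volume_Icc, Real.volume_Ico, ← ENNReal.ofReal_add (by linarith) (by linarith)]
      ring_nf
    · rw [Set.disjoint_left]
      intro x hx1 hx2
      simp only [mem_Icc] at hx1
      simp only [mem_Ico] at hx2
      linarith [hx1.2, hx2.1]

lemma uniformAngle_sqrt_le {z d x : ℝ} (hz : 0 < z) (hd : 0 < d) (hx : 0 ≤ x) :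
    uniformAngle {φ : ℝ | Real.sqrt (z ^ 2 + d ^ 2 - 2 * z * d * Real.cos φ) ≤ x} =
      ENNReal.ofReal (arccos ((z ^ 2 + d ^ 2 - x ^ 2) / (2 * z * d)) / π) := by
  have hπ := Real.pi_pos
  have h2zd : (0 : ℝ) < 2 * z * d := by positivity
  set u : ℝ := (z ^ 2 + d ^ 2 - x ^ 2) / (2 * z * d) with hu_def
  have hset : {φ : ℝ | Real.sqrt (z ^ 2 + d ^ 2 - 2 * z * d * Real.cos φ) ≤ x} =
      {φ : ℝ | u ≤ Real.cos φ} := by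
    ext φ
    simp only [mem_setOf_eq]
    rw [Real.sqrt_le_iff, hu_def, div_le_iff₀ h2zd]
    constructor
    · rintro ⟨-, h⟩; linarith
    · intro h; exact ⟨hx, by linarith⟩
  rw [hset, uniformAngle, Measure.smul_apply, smul_eq_mul,
    Measure.restrict_apply' measurableSet_Ico, cos_superlevel_volume u]
  have harc : 0 ≤ arccos u := Real.arccos_nonneg u
  have h1 : (2 : ℝ) * arccos u = arccos u / π * (2 * π) := by
    field_simp
  rw [h1, ENNReal.ofReal_mul (p := arccos u / π) (by positivity)]
  have h0 : ENNReal.ofReal (2 * π) ≠ 0 := by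
    simp [ENNReal.ofReal_eq_zero]; positivity
  have htop : ENNReal.ofReal (2 * π) ≠ ⊤ := ENNReal.ofReal_ne_top
  calc (ENNReal.ofReal (2 * π))⁻¹ *
        (ENNReal.ofReal (arccos u / π) * ENNReal.ofReal (2 * π))
      = ENNReal.ofReal (arccos u / π) *
        (ENNReal.ofReal (2 * π) * (ENNReal.ofReal (2 * π))⁻¹) := by ring
    _ = ENNReal.ofReal (arccos u / π) := by
        rw [ENNReal.mul_inv_cancel h0 htop, mul_one]

lemma ofReal_fL_eq_lintegral {l d M : ℝ} (fZ : ℝ → ℝ) (hfZcont : Continuous fZ)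
    (hfZnn : ∀ z, 0 ≤ fZ z) (hl : 0 < l) (hd : 0 < d) (hld : l ≠ d) :
    ENNReal.ofReal (∫ z in Ioo |l - d| (min (l + d) M),
        2 * l * fZ z / (π * Real.sqrt ((l ^ 2 - (z - d) ^ 2) * ((z + d) ^ 2 - l ^ 2)))) =
      ∫⁻ z in Ioo |l - d| (min (l + d) M),
        ENNReal.ofReal (2 * l * fZ z /
          (π * Real.sqrt ((l ^ 2 - (z - d) ^ 2) * ((z + d) ^ 2 - l ^ 2)))) := by
  have hπ := Real.pi_pos
  set a := |l - d| with ha_def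
  set b := min (l + d) M with hb_def
  set ρ : ℝ → ℝ := fun z =>
    2 * l * fZ z / (π * Real.sqrt ((l ^ 2 - (z - d) ^ 2) * ((z + d) ^ 2 - l ^ 2))) with hρ_def
  have hρnn : ∀ z, 0 ≤ ρ z := by
    intro z
    apply div_nonneg
    · have := hfZnn z; positivity
    · positivity
  rcases le_or_gt b a with hba | hab
  · rw [Ioo_eq_empty (by exact fun h => absurd hba (not_le.mpr h))]
    simp
  · have ha0 : 0 < a := abs_pos.mpr (sub_ne_zero.mpr hld)
    have hble : b ≤ l + d := min_le_left _ _
    -- integrability of ρ on Ioo a b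
    have hQ : ∀ z : ℝ, (l ^ 2 - (z - d) ^ 2) * ((z + d) ^ 2 - l ^ 2) =
        (z ^ 2 - (l - d) ^ 2) * ((l + d) ^ 2 - z ^ 2) := fun z => by ring
    have hg := ftc_core (p := l) (q := d) (b := b) hl hd (le_of_lt hab) hble
    set g : ℝ → ℝ := fun z =>
      2 * z / Real.sqrt ((z ^ 2 - (l - d) ^ 2) * ((l + d) ^ 2 - z ^ 2)) with hg_def
    set h : ℝ → ℝ := fun z => l * fZ z / (π * z) with hh_def
    have hmeas : AEStronglyMeasurable h (volume.restrict (Ioo a b)) := by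
      apply Measurable.aestronglyMeasurable
      exact ((measurable_const.mul hfZcont.measurable).div
        (measurable_const.mul measurable_id))
    obtain ⟨C, hC⟩ : ∃ C, ∀ z ∈ Icc a b, ‖h z‖ ≤ C := by
      have hcomp : IsCompact (Icc a b) := isCompact_Icc
      have hcont : ContinuousOn (fun z => ‖h z‖) (Icc a b) := by
        apply ContinuousOn.norm
        apply ContinuousOn.div
        · exact (continuous_const.mul hfZcont).continuousOn
        · exact (continuous_const.mul continuous_id).continuousOn
        · intro z hz
          have : 0 < z := lt_of_lt_of_le ha0 hz.1
          positivity
      rcases hcomp.exists_bound_of_continuousOn hcont with ⟨C, hC⟩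
      exact ⟨C, fun z hz => le_trans (le_abs_self _) (by simpa using hC z hz)⟩
    have hint : IntegrableOn (fun z => h z * g z) (Ioo a b) volume := by
      apply Integrable.bdd_mul hg.1 hmeas
      filter_upwards [ae_restrict_mem measurableSet_Ioo] with z hz
      exact hC z (Ioo_subset_Icc_self hz)
    have hρint : IntegrableOn ρ (Ioo a b) volume := by
      refine (integrableOn_congr_fun ?_ measurableSet_Ioo).mpr hint
      intro z hz
      have hz0 : 0 < z := lt_of_lt_of_le ha0 hz.1.le
      rw [hρ_def]
      simp only
      rw [hQ z]
      rw [hh_def, hg_def]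
      simp only
      set S := Real.sqrt ((z ^ 2 - (l - d) ^ 2) * ((l + d) ^ 2 - z ^ 2)) with hS_def
      rw [div_mul_div_comm, show l * fZ z * (2 * z) = z * (2 * l * fZ z) by ring,
        show π * z * S = z * (π * S) by ring, mul_div_mul_left _ _ hz0.ne']
    rw [MeasureTheory.ofReal_integral_eq_lintegral_ofReal hρint
      (Filter.Eventually.of_forall hρnn)]

lemma inner_l_lintegral {z d x : ℝ} (c : ℝ) (hc : 0 ≤ c) (hz : 0 < z) (hd : 0 < d)
    (hx : 0 ≤ x) :
    ∫⁻ l in Ioo |z - d| (z + d) ∩ Iic x,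
        ENNReal.ofReal (2 * l * c /
          (π * Real.sqrt ((l ^ 2 - (z - d) ^ 2) * ((z + d) ^ 2 - l ^ 2)))) =
      ENNReal.ofReal c *
        ENNReal.ofReal (arccos ((z ^ 2 + d ^ 2 - x ^ 2) / (2 * z * d)) / π) := by
  have hπ := Real.pi_pos
  have h2zd : (0 : ℝ) < 2 * z * d := by positivity
  set a := |z - d| with ha_def
  have ha0 : 0 ≤ a := abs_nonneg _
  rcases le_or_gt x a with hxa | hax
  · have hempty : Ioo a (z + d) ∩ Iic x = ∅ := by
      ext l
      simp only [mem_inter_iff, mem_Ioo, mem_Iic, mem_empty_iff_false, iff_false, not_and]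
      intro h1 _
      linarith [h1.1]
    rw [hempty, Measure.restrict_empty, lintegral_zero_measure]
    have hu1 : 1 ≤ (z ^ 2 + d ^ 2 - x ^ 2) / (2 * z * d) := by
      rw [le_div_iff₀ h2zd]
      have hx2 : x ^ 2 ≤ (z - d) ^ 2 := by
        have := sq_le_sq' (by linarith : -a ≤ x) hxa
        rwa [ha_def, sq_abs] at this
      nlinarith
    rw [Real.arccos_eq_zero.mpr hu1, zero_div, ENNReal.ofReal_zero, mul_zero]
  · set b := min (z + d) x with hb_def
    have haz : a ≤ z + d := by
      rw [ha_def, abs_le]; constructor <;> linarith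
    have hb1 : a ≤ b := le_min haz hax.le
    have hset : (Ioo a (z + d) ∩ Iic x : Set ℝ) =ᵐ[volume] Ioo a b := by
      rcases le_or_gt (z + d) x with hzx | hxz
      · have : Ioo a (z + d) ∩ Iic x = Ioo a (z + d) := by
          refine inter_eq_left.mpr fun l hl => ?_
          exact le_trans hl.2.le hzx
        rw [this, hb_def, min_eq_left hzx]
        exact Filter.EventuallyEq.rfl
      · have : Ioo a (z + d) ∩ Iic x = Ioc a x := by
          ext l
          simp only [mem_inter_iff, mem_Ioo, mem_Iic, mem_Ioc]
          constructor
          · rintro ⟨⟨h1, _⟩, h3⟩; exact ⟨h1, h3⟩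
          · rintro ⟨h1, h2⟩; exact ⟨⟨h1, lt_of_le_of_lt h2 hxz⟩, h2⟩
        rw [this, hb_def, min_eq_right hxz.le]
        exact Ioo_ae_eq_Ioc.symm
    rw [MeasureTheory.setLIntegral_congr hset]
    have hint := ftc_core (p := z) (q := d) (b := b) hz hd hb1 (min_le_left _ _)
    set f : ℝ → ℝ := fun l =>
      2 * l / Real.sqrt ((l ^ 2 - (z - d) ^ 2) * ((z + d) ^ 2 - l ^ 2)) with hf_def
    have hIeq : ∀ l : ℝ, 2 * l * c /
        (π * Real.sqrt ((l ^ 2 - (z - d) ^ 2) * ((z + d) ^ 2 - l ^ 2))) = c / π * f l := by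
      intro l
      rw [hf_def]
      simp only
      rw [div_mul_div_comm]
      congr 1
      ring
    simp_rw [hIeq]
    have hintc : IntegrableOn (fun l => c / π * f l) (Ioo a b) volume :=
      hint.1.const_mul _
    rw [← MeasureTheory.ofReal_integral_eq_lintegral_ofReal hintc ?_]
    · rw [MeasureTheory.integral_const_mul, hint.2]
      have harc : arccos ((z ^ 2 + d ^ 2 - b ^ 2) / (2 * z * d)) =
          arccos ((z ^ 2 + d ^ 2 - x ^ 2) / (2 * z * d)) := by
        rcases le_or_gt x (z + d) with hxz | hzx
        · rw [hb_def, min_eq_right hxz]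
        · rw [hb_def, min_eq_left hzx.le]
          have h1 : (z ^ 2 + d ^ 2 - (z + d) ^ 2) / (2 * z * d) = -1 := by
            rw [div_eq_iff (ne_of_gt h2zd)]; ring
          have h2 : (z ^ 2 + d ^ 2 - x ^ 2) / (2 * z * d) ≤ -1 := by
            rw [div_le_iff₀ h2zd]
            nlinarith
          rw [h1, Real.arccos_neg_one, Real.arccos_eq_pi.mpr h2]
      rw [harc, ← ENNReal.ofReal_mul hc]
      congr 1
      field_simp
    · filter_upwards [ae_restrict_mem measurableSet_Ioo] with l hl
      have hl0 : 0 < l := lt_of_le_of_lt ha0 hl.1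
      have hfnn : 0 ≤ f l := by rw [hf_def]; positivity
      positivity

instance : IsFiniteMeasure uniformAngle := by
  constructor
  rw [uniformAngle, Measure.smul_apply, smul_eq_mul]
  have hπ := Real.pi_pos
  refine ENNReal.mul_lt_top ?_ ?_
  · exact ENNReal.inv_lt_top.mpr (ENNReal.ofReal_pos.mpr (by positivity))
  · rw [Measure.restrict_apply_univ, Real.volume_Ico]
    exact ENNReal.ofReal_lt_top

/-- Density of the displacement `L = √(Z² + d² − 2Zd·cos Φ)`, where `Z` has a
continuous density `f_Z` supported in `[0, M]` and `Φ ~ U[0,2π)` is independent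
of `Z`: `f_L(l) = ∫_{|l−d|}^{min(l+d,M)} 2l·f_Z(z)/(π·√((l²−(z−d)²)((z+d)²−l²))) dz`
for `0 < l < M + d` (and `0` elsewhere). -/
theorem density_of_cosine_law_displacement
    {Ω : Type*} [MeasureSpace Ω] [IsProbabilityMeasure (ℙ : Measure Ω)]
    (Z Φ : Ω → ℝ) (hZmeas : Measurable Z) (hΦmeas : Measurable Φ)
    (hindep : IndepFun Z Φ ℙ)
    (hΦu : Measure.map Φ ℙ = uniformAngle)
    (d M : ℝ) (hd : 0 < d) (hM : d ≤ M)
    (fZ : ℝ → ℝ) (hfZcont : Continuous fZ) (hfZnonneg : ∀ z, 0 ≤ fZ z)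
    (hfZsupp : ∀ z, z < 0 ∨ M < z → fZ z = 0)
    (hZlaw : Measure.map Z ℙ = volume.withDensity (fun z => ENNReal.ofReal (fZ z)))
    (L : Ω → ℝ)
    (hL : L = fun ω => Real.sqrt ((Z ω) ^ 2 + d ^ 2 - 2 * Z ω * d * Real.cos (Φ ω))) :
    Measure.map L ℙ = volume.withDensity (fun l => ENNReal.ofReal
      (if 0 < l ∧ l < M + d then
        ∫ z in Set.Ioo |l - d| (min (l + d) M),
          2 * l * fZ z /
            (π * Real.sqrt ((l ^ 2 - (z - d) ^ 2) * ((z + d) ^ 2 - l ^ 2)))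
      else 0)) := by
  have hπ := Real.pi_pos
  have hLmeas : Measurable L := by
    rw [hL]
    exact Real.continuous_sqrt.measurable.comp
      ((((hZmeas.pow_const 2).add_const _).sub
        (((hZmeas.const_mul 2).mul_const d).mul
          (Real.continuous_cos.measurable.comp hΦmeas))))
  set μZ := volume.withDensity fun z => ENNReal.ofReal (fZ z) with hμZ
  have hprod : Measure.map (fun ω => (Z ω, Φ ω)) ℙ = μZ.prod uniformAngle := by
    rw [← hZlaw, ← hΦu]
    exact (ProbabilityTheory.indepFun_iff_map_prod_eq_prod_map_map
      hZmeas.aemeasurable hΦmeas.aemeasurable).mp hindep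
  set g : ℝ × ℝ → ℝ :=
    fun p => Real.sqrt (p.1 ^ 2 + d ^ 2 - 2 * p.1 * d * Real.cos p.2) with hg_def
  have hgmeas : Measurable g := by
    apply Real.continuous_sqrt.measurable.comp
    exact ((measurable_fst.pow_const 2).add_const _).sub
      (((measurable_fst.const_mul 2).mul_const d).mul
        (Real.continuous_cos.measurable.comp measurable_snd))
  have hmapL : Measure.map L ℙ = Measure.map g (μZ.prod uniformAngle) := by
    rw [← hprod, Measure.map_map hgmeas (hZmeas.prodMk hΦmeas), hL]
    rfl
  haveI hprob : IsProbabilityMeasure (Measure.map L ℙ) :=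
    Measure.isProbabilityMeasure_map hLmeas.aemeasurable
  refine Measure.ext_of_Iic (Measure.map L ℙ) _ fun x => ?_
  rw [hmapL, Measure.map_apply hgmeas measurableSet_Iic,
    withDensity_apply _ measurableSet_Iic]
  rcases lt_or_ge x 0 with hx | hx
  · have h1 : g ⁻¹' Iic x = ∅ := by
      ext p
      simp only [mem_preimage, mem_Iic, mem_empty_iff_false, iff_false, not_le, hg_def]
      exact lt_of_lt_of_le hx (Real.sqrt_nonneg _)
    rw [h1, measure_empty]
    symm
    rw [setLIntegral_congr_fun measurableSet_Iic
      (fun l hl => ?_), lintegral_zero]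
    rw [if_neg (by rintro ⟨h0, -⟩; simp only [mem_Iic] at hl; linarith)]
    exact ENNReal.ofReal_zero
  · -- main case
    set G : ℝ → ℝ := fun z => arccos ((z ^ 2 + d ^ 2 - x ^ 2) / (2 * z * d)) with hG_def
    have hA : (μZ.prod uniformAngle) (g ⁻¹' Iic x) =
        ∫⁻ z, ENNReal.ofReal (fZ z) * ENNReal.ofReal (G z / π) := by
      rw [Measure.prod_apply (hgmeas measurableSet_Iic), hμZ,
        lintegral_withDensity_eq_lintegral_mul _
          hfZcont.measurable.ennreal_ofReal
          (measurable_measure_prodMk_left (hgmeas measurableSet_Iic))]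
      apply lintegral_congr_ae
      filter_upwards [(Set.countable_singleton (0 : ℝ)).ae_notMem volume] with z hz
      simp only [Pi.mul_apply, mem_singleton_iff] at hz ⊢
      rcases lt_trichotomy z 0 with hz0 | hz0 | hz0
      · rw [hfZsupp z (Or.inl hz0)]
        simp
      · exact absurd hz0 hz
      · congr 1
        have hAeq : Prod.mk z ⁻¹' (g ⁻¹' Iic x) =
            {φ : ℝ | Real.sqrt (z ^ 2 + d ^ 2 - 2 * z * d * Real.cos φ) ≤ x} := rfl
        rw [hAeq, uniformAngle_sqrt_le hz0 hd hx, hG_def]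
    rw [hA]
    -- Part B : compute the density side
    symm
    set ρ : ℝ → ℝ → ℝ := fun l z => 2 * l * fZ z /
      (π * Real.sqrt ((l ^ 2 - (z - d) ^ 2) * ((z + d) ^ 2 - l ^ 2))) with hρ_def
    have hB1 : ∀ᵐ l ∂(volume.restrict (Iic x)),
        ENNReal.ofReal (if 0 < l ∧ l < M + d then
            ∫ z in Set.Ioo |l - d| (min (l + d) M), ρ l z else 0) =
          ∫⁻ z in Ioo |l - d| (min (l + d) M), ENNReal.ofReal (ρ l z) := by
      refine ae_restrict_of_ae ?_
      filter_upwards [(Set.countable_singleton d).ae_notMem volume] with l hl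
      simp only [mem_singleton_iff] at hl
      by_cases hcond : 0 < l ∧ l < M + d
      · rw [if_pos hcond]
        exact ofReal_fL_eq_lintegral fZ hfZcont hfZnonneg hcond.1 hd hl
      · rw [if_neg hcond]
        have hempty : Ioo |l - d| (min (l + d) M) = ∅ := by
          rcases not_and_or.mp hcond with h | h
          · push_neg at h
            apply Ioo_eq_empty
            intro hlt
            have h1 : |l - d| = d - l := by
              rw [abs_of_nonpos (by linarith)]; ring
            have := min_le_left (l + d) M
            rw [h1] at hlt
            linarith
          · push_neg at h
            apply Ioo_eq_empty
            intro hlt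
            have h1 : |l - d| = l - d := abs_of_nonneg (by linarith)
            have := min_le_right (l + d) M
            rw [h1] at hlt
            linarith
        rw [hempty, Measure.restrict_empty, lintegral_zero_measure, ENNReal.ofReal_zero]
    rw [lintegral_congr_ae hB1]
    -- indicator form and Tonelli
    set F : ℝ × ℝ → ENNReal := fun p =>
      if p.1 ≤ x ∧ |p.1 - d| < p.2 ∧ p.2 < p.1 + d ∧ p.2 < M
      then ENNReal.ofReal (ρ p.1 p.2) else 0 with hF_def
    have hCmeas : MeasurableSet {p : ℝ × ℝ |
        p.1 ≤ x ∧ |p.1 - d| < p.2 ∧ p.2 < p.1 + d ∧ p.2 < M} := by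
      have heq : {p : ℝ × ℝ | p.1 ≤ x ∧ |p.1 - d| < p.2 ∧ p.2 < p.1 + d ∧ p.2 < M} =
          {p : ℝ × ℝ | p.1 ≤ x} ∩ ({p : ℝ × ℝ | |p.1 - d| < p.2} ∩
            ({p : ℝ × ℝ | p.2 < p.1 + d} ∩ {p : ℝ × ℝ | p.2 < M})) := by
        ext p; simp [and_assoc]
      rw [heq]
      exact (measurableSet_le measurable_fst measurable_const).inter
        ((measurableSet_lt ((measurable_fst.sub_const d).abs) measurable_snd).inter
          ((measurableSet_lt measurable_snd (measurable_fst.add_const d)).inter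
            (measurableSet_lt measurable_snd measurable_const)))
    have hρmeas : Measurable fun p : ℝ × ℝ => ENNReal.ofReal (ρ p.1 p.2) := by
      apply Measurable.ennreal_ofReal
      apply Measurable.div
      · exact (measurable_fst.const_mul 2).mul (hfZcont.measurable.comp measurable_snd)
      · apply Measurable.const_mul
        apply Real.continuous_sqrt.measurable.comp
        apply Measurable.mul
        · exact ((measurable_fst.pow_const 2).sub
            ((measurable_snd.sub_const d).pow_const 2))
        · exact (((measurable_snd.add_const d).pow_const 2).sub
            (measurable_fst.pow_const 2))
    have hFmeas : Measurable F := Measurable.ite hCmeas hρmeas measurable_const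
    have hB2 : ∫⁻ l in Iic x, (∫⁻ z in Ioo |l - d| (min (l + d) M),
        ENNReal.ofReal (ρ l z)) =
        ∫⁻ z, ∫⁻ l, F (l, z) := by
      rw [← lintegral_indicator measurableSet_Iic]
      rw [← MeasureTheory.lintegral_lintegral_swap
        (f := fun l z => F (l, z)) (by exact hFmeas.aemeasurable)]
      apply lintegral_congr
      intro l
      by_cases hlx : l ≤ x
      · rw [Set.indicator_of_mem (show l ∈ Iic x from hlx), ← lintegral_indicator measurableSet_Ioo]
        apply lintegral_congr
        intro z
        rw [indicator_apply, hF_def]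
        simp only [mem_Ioo, lt_min_iff]
        by_cases hzmem : |l - d| < z ∧ z < l + d ∧ z < M
        · rw [if_pos hzmem, if_pos ⟨hlx, hzmem⟩]
        · rw [if_neg hzmem, if_neg (fun hcon => hzmem hcon.2)]
      · rw [Set.indicator_of_notMem (show l ∉ Iic x from hlx)]
        have hz0 : ∀ y : ℝ, F (l, y) = 0 := fun y => by
          rw [hF_def]
          exact if_neg fun h => hlx h.1
        simp [hz0]
    rw [hB2]
    apply lintegral_congr_ae
    filter_upwards [((Set.countable_singleton (0 : ℝ)).insert M).ae_notMem volume] with z hz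
    simp only [mem_insert_iff, mem_singleton_iff, not_or] at hz
    obtain ⟨hzM, hz0⟩ := hz
    rcases lt_trichotomy z 0 with h0 | h0 | h0
    · have hF0 : ∀ l : ℝ, F (l, z) = 0 := fun l => by
        rw [hF_def]
        exact if_neg fun h => absurd h.2.1 (not_lt.mpr (h0.le.trans (abs_nonneg _)))
      rw [hfZsupp z (Or.inl h0)]
      simp [hF0]
    · exact absurd h0 hz0
    · rcases lt_trichotomy z M with hM0 | hM0 | hM0
      · have hsec : ∀ l : ℝ, F (l, z) =
            (Ioo |z - d| (z + d) ∩ Iic x).indicator (fun l => ENNReal.ofReal (ρ l z)) l := by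
          intro l
          rw [hF_def, Set.indicator_apply]
          simp only [mem_inter_iff, mem_Ioo, mem_Iic]
          refine if_congr ?_ rfl rfl
          constructor
          · rintro ⟨h1, h2, h3, h4⟩
            have h2' := abs_sub_lt_iff.mp h2
            exact ⟨⟨abs_sub_lt_iff.mpr ⟨by linarith [h2'.1, h2'.2], by linarith [h2'.2]⟩,
              by linarith [h2'.1]⟩, h1⟩
          · rintro ⟨⟨h1, h2⟩, h3⟩
            have h1' := abs_sub_lt_iff.mp h1
            exact ⟨h3, abs_sub_lt_iff.mpr ⟨by linarith [h1'.1], by linarith [h1'.2]⟩,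
              by linarith [h1'.1], hM0⟩
        calc ∫⁻ l, F (l, z)
            = ∫⁻ l in Ioo |z - d| (z + d) ∩ Iic x, ENNReal.ofReal (ρ l z) := by
              simp_rw [hsec]
              exact lintegral_indicator (measurableSet_Ioo.inter measurableSet_Iic) _
          _ = ENNReal.ofReal (fZ z) * ENNReal.ofReal (G z / π) := by
              simp only [hG_def]
              exact inner_l_lintegral (fZ z) (hfZnonneg z) h0 hd hx
      · exact absurd hM0 hzM
      · have hF0 : ∀ l : ℝ, F (l, z) = 0 := fun l => by
          rw [hF_def]
          exact if_neg fun h => absurd h.2.2.2 (not_lt.mpr hM0.le)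
        rw [hfZsupp z (Or.inr hM0)]
        simp [hF0]
end
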